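/- Let A be a finite-dimensional k-algebra and σ a k-algebra automorphism of A. On the twisted trivial extension Δ_σA = A ⊕ D(A)_σ, define a bilinear form B by B((a, f), (b, g)) = g(a) + f(σ(b)). Then B is nondegenerate and associative, and the map ν : Δ_σA → Δ_σA given by ν(a, f) = (σ^{-1}(a), f ∘ σ) is a k-algebra automorphism satisfying B(x, y) = B(y, ν(x)) for all x, y ∈ Δ_σA; that is, the twisted trivial extension of A with respect to σ has Nakayama automorphism given by σ^{-1}. -/
import Mathlib


/-- The multiplication of the twisted trivial extension `Δ_σA = A ⊕ D(A)_σ`, modeled on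
`A × (A →ₗ[k] k)`: `(a, f)(b, g) = (ab, a·g + f·b)`, where `D(A)_σ` carries the twisted
bimodule structure `(a·f·b)(x) = f(σ(b)xa)`, so `(a·g)(x) = g(xa)` and
`(f·b)(x) = f(σ(b)x)`. -/
def twTrivExtMul {k A : Type*} [Field k] [Ring A] [Algebra k A] (σ : A ≃ₐ[k] A)
    (p q : A × (A →ₗ[k] k)) : A × (A →ₗ[k] k) :=
  (p.1 * q.1, q.2 ∘ₗ LinearMap.mulRight k p.1 + p.2 ∘ₗ LinearMap.mulLeft k (σ q.1))

/-- The bilinear form `B((a, f), (b, g)) = g(a) + f(σ(b))` on the twisted trivial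
extension `Δ_σA`. -/
def twTrivExtForm {k A : Type*} [Field k] [Ring A] [Algebra k A] (σ : A ≃ₐ[k] A)
    (p q : A × (A →ₗ[k] k)) : k :=
  q.2 p.1 + p.2 (σ q.1)

/-- Let `A` be a finite-dimensional `k`-algebra and `σ` a `k`-algebra
automorphism of `A`.  On the twisted trivial extension `Δ_σA = A ⊕ D(A)_σ`, the bilinear
form `B((a, f), (b, g)) = g(a) + f(σ(b))` is nondegenerate and associative, and the map
`ν(a, f) = (σ⁻¹(a), f ∘ σ)` is a `k`-algebra automorphism satisfying
`B(x, y) = B(y, ν(x))`; that is, the twisted trivial extension of `A` with respect to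
`σ` has Nakayama automorphism given by `σ⁻¹`. -/
theorem stmt_9 (k A : Type*) [Field k] [Ring A] [Algebra k A] [FiniteDimensional k A]
    (σ : A ≃ₐ[k] A) :
    -- the form is nondegenerate
    (∀ p : A × (A →ₗ[k] k),
      (∀ q : A × (A →ₗ[k] k), twTrivExtForm σ p q = 0) → p = 0) ∧
    -- and associative
    (∀ p q r : A × (A →ₗ[k] k),
      twTrivExtForm σ (twTrivExtMul σ p q) r = twTrivExtForm σ p (twTrivExtMul σ q r)) ∧
    -- `ν(a, f) = (σ⁻¹(a), f ∘ σ)` is a `k`-algebra automorphism of `Δ_σA`: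
    (∀ p p' : A × (A →ₗ[k] k),
      (fun q : A × (A →ₗ[k] k) => (σ.symm q.1, q.2 ∘ₗ σ.toLinearMap)) (p + p') =
        (σ.symm p.1, p.2 ∘ₗ σ.toLinearMap) + (σ.symm p'.1, p'.2 ∘ₗ σ.toLinearMap)) ∧
    (∀ (c : k) (p : A × (A →ₗ[k] k)),
      (σ.symm (c • p).1, (c • p).2 ∘ₗ σ.toLinearMap) =
        c • ((σ.symm p.1, p.2 ∘ₗ σ.toLinearMap) : A × (A →ₗ[k] k))) ∧
    ((σ.symm (1 : A), (0 : A →ₗ[k] k) ∘ₗ σ.toLinearMap) =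
      ((1 : A), (0 : A →ₗ[k] k))) ∧
    (∀ p q : A × (A →ₗ[k] k),
      (σ.symm (twTrivExtMul σ p q).1, (twTrivExtMul σ p q).2 ∘ₗ σ.toLinearMap) =
        twTrivExtMul σ (σ.symm p.1, p.2 ∘ₗ σ.toLinearMap)
          (σ.symm q.1, q.2 ∘ₗ σ.toLinearMap)) ∧
    Function.Bijective
      (fun p : A × (A →ₗ[k] k) => ((σ.symm p.1, p.2 ∘ₗ σ.toLinearMap) : A × (A →ₗ[k] k))) ∧
    -- and it is a Nakayama automorphism: B(x, y) = B(y, ν(x))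
    (∀ p q : A × (A →ₗ[k] k),
      twTrivExtForm σ p q = twTrivExtForm σ q (σ.symm p.1, p.2 ∘ₗ σ.toLinearMap)) := by
  refine ⟨?_, ?_, ?_, ?_, ?_, ?_, ?_, ?_⟩
  · intro p hp
    have h1 : p.1 = 0 := by
      rw [← Module.forall_dual_apply_eq_zero_iff k p.1]
      intro g
      have := hp (0, g)
      simpa [twTrivExtForm] using this
    have h2 : p.2 = 0 := by
      ext x
      have := hp (σ.symm x, 0)
      simpa [twTrivExtForm] using this
    exact Prod.ext h1 h2
  · intro p q r
    simp [twTrivExtForm, twTrivExtMul, map_mul, mul_assoc]; ring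
  · intro p p'
    ext x <;> simp [add_mul, LinearMap.add_comp]
  · intro c p
    ext x <;> simp
  · simp
  · intro p q
    refine Prod.ext ?_ ?_
    · simp [twTrivExtMul, map_mul]
    · ext x
      simp [twTrivExtMul, map_mul]
  · constructor
    · intro p q h
      have h1 := congrArg Prod.fst h
      have h2 := congrArg Prod.snd h
      simp only at h1 h2
      refine Prod.ext (σ.symm.injective h1) ?_
      ext x
      have := congrFun (congrArg DFunLike.coe h2) (σ.symm x)
      simpa using this
    · intro q
      refine ⟨(σ q.1, q.2 ∘ₗ σ.symm.toLinearMap), ?_⟩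
      refine Prod.ext (by simp) ?_
      ext x
      simp
  · intro p q
    simp [twTrivExtForm, add_comm]
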